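/- Let B be an abelian C*-subalgebra of A containing an approximate unit of A and let m, n ∈ N(B). Then the induced partial homeomorphisms satisfy α_{mn} = α_m ∘ α_n (on the appropriate domain) and α_{n*} = α_n⁻¹. -/

import Mathlib

open Filter in
/-- `e : ι → A` (along the filter `l`) is an approximate unit of `A` contained
in the C*-subalgebra `B`. -/
def IsApproxUnitIn {A : Type*} [NormedRing A] [StarRing A] [PartialOrder A]
    [NormedAlgebra ℂ A] [StarModule ℂ A] (B : StarSubalgebra ℂ A)
    {ι : Type*} (l : Filter ι) (e : ι → A) : Prop :=
  l.NeBot ∧ (∀ i, e i ∈ B) ∧ (∀ i, 0 ≤ e i) ∧ (∀ i, ‖e i‖ ≤ 1) ∧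
    ∀ a : A, Tendsto (fun i => e i * a) l (nhds a) ∧
      Tendsto (fun i => a * e i) l (nhds a)

/-- The normalizer `N(B) = {n : n B n* ⊆ B and n* B n ⊆ B}` of a subalgebra. -/
def starNormalizer {A : Type*} [NormedRing A] [StarRing A] [NormedAlgebra ℂ A]
    [StarModule ℂ A] (B : StarSubalgebra ℂ A) : Set A :=
  {n : A | ∀ b ∈ B, n * b * star n ∈ B ∧ star n * b * n ∈ B}

open scoped ComplexOrder

open scoped ComplexOrder in
private lemma stmt18_cpos {a b : ℂ} (h : 0 < a * b) (hb : 0 < b) : 0 < a := by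
  rw [Complex.pos_iff] at h hb ⊢
  obtain ⟨h1, h2⟩ := h
  obtain ⟨hb1, hb2⟩ := hb
  rw [Complex.mul_im] at h2
  rw [Complex.mul_re] at h1
  rw [← hb2] at h1 h2
  have haim : a.im = 0 := by
    rcases mul_eq_zero.mp (show a.im * b.re = 0 by linarith) with h' | h'
    · exact h'
    · exact absurd h' (ne_of_gt hb1)
  refine ⟨?_, haim.symm⟩
  have h1' : 0 < a.re * b.re := by simpa using h1
  rcases mul_pos_iff.mp h1' with h' | h'
  · exact h'.1
  · exact absurd hb1 (not_lt.mpr h'.2.le)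


/-- For `m, n` in the normalizer of an abelian C*-subalgebra
`B` containing an approximate unit of `A`, the induced partial homeomorphisms
of the spectrum of `B` (characterized by `y(p* b p) = (α_p y)(b)·y(p* p)` on
`dom p = {y : y(p* p) > 0}`) satisfy `α_{mn} = α_m ∘ α_n` on `dom (mn)` and
`α_{n*} = α_n⁻¹`.  (The memberships `n* n ∈ B`, etc., follow from the
approximate-unit hypothesis and are recorded here so that the evaluation
against characters of `B` is well formed.) -/
theorem stmt18 {A : Type*} [NormedRing A] [StarRing A] [CStarRing A]
    [NormedAlgebra ℂ A] [StarModule ℂ A] [CompleteSpace A]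
    [PartialOrder A] [StarOrderedRing A]
    (B : StarSubalgebra ℂ A) (hBclosed : IsClosed (B : Set A))
    (hBcomm : ∀ b ∈ B, ∀ b' ∈ B, b * b' = b' * b)
    {ι : Type*} (l : Filter ι) (e : ι → A) (he : IsApproxUnitIn B l e)
    (m n : A) (hm : m ∈ starNormalizer B) (hn : n ∈ starNormalizer B)
    (hmm : star m * m ∈ B) (hnn : star n * n ∈ B)
    (hnstar : n * star n ∈ B) (hmn : star (m * n) * (m * n) ∈ B)
    (hNm : ∀ b ∈ B, star m * b * m ∈ B) (hNn : ∀ b ∈ B, star n * b * n ∈ B)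
    (hNnstar : ∀ b ∈ B, n * b * star n ∈ B)
    (hNmn : ∀ b ∈ B, star (m * n) * b * (m * n) ∈ B)
    (αm αn αmn αnstar :
      WeakDual.characterSpace ℂ ↥B → WeakDual.characterSpace ℂ ↥B)
    (hαm : ∀ y : WeakDual.characterSpace ℂ ↥B, 0 < y ⟨star m * m, hmm⟩ →
      ∀ b : ↥B, y ⟨star m * ↑b * m, hNm ↑b b.2⟩ = αm y b * y ⟨star m * m, hmm⟩)
    (hαn : ∀ y : WeakDual.characterSpace ℂ ↥B, 0 < y ⟨star n * n, hnn⟩ →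
      ∀ b : ↥B, y ⟨star n * ↑b * n, hNn ↑b b.2⟩ = αn y b * y ⟨star n * n, hnn⟩)
    (hαmn : ∀ y : WeakDual.characterSpace ℂ ↥B, 0 < y ⟨star (m * n) * (m * n), hmn⟩ →
      ∀ b : ↥B, y ⟨star (m * n) * ↑b * (m * n), hNmn ↑b b.2⟩ =
        αmn y b * y ⟨star (m * n) * (m * n), hmn⟩)
    (hαnstar : ∀ y : WeakDual.characterSpace ℂ ↥B, 0 < y ⟨n * star n, hnstar⟩ →
      ∀ b : ↥B, y ⟨n * ↑b * star n, hNnstar ↑b b.2⟩ =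
        αnstar y b * y ⟨n * star n, hnstar⟩) :
    (∀ y : WeakDual.characterSpace ℂ ↥B,
      0 < y ⟨star (m * n) * (m * n), hmn⟩ → αmn y = αm (αn y)) ∧
    (∀ y : WeakDual.characterSpace ℂ ↥B,
      0 < y ⟨star n * n, hnn⟩ → αnstar (αn y) = y) ∧
    (∀ x : WeakDual.characterSpace ℂ ↥B,
      0 < x ⟨n * star n, hnstar⟩ → αn (αnstar x) = x) := by
  letI : CStarAlgebra A :=
    { ‹NormedRing A›, ‹StarRing A›, ‹CStarRing A›, ‹NormedAlgebra ℂ A›, ‹StarModule ℂ A›,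
      ‹CompleteSpace A› with }
  haveI : IsClosed ((B : Set A)) := hBclosed
  have yeq : ∀ (y : WeakDual.characterSpace ℂ ↥B) {x1 x2 : A} (h1 : x1 ∈ B) (h2 : x2 ∈ B),
      x1 = x2 → y ⟨x1, h1⟩ = y ⟨x2, h2⟩ := by
    rintro y x1 x2 h1 h2 rfl; rfl
  have charpos : ∀ (y : WeakDual.characterSpace ℂ ↥B) (p : ↥B), (0 : A) ≤ (p : A) → 0 ≤ y p := by
    intro y p hp
    have h1 : y p ∈ spectrum ℂ p := WeakDual.CharacterSpace.apply_mem_spectrum y p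
    rw [StarSubalgebra.spectrum_eq] at h1
    exact spectrum_nonneg_of_nonneg hp h1
  have charmono : ∀ (y : WeakDual.characterSpace ℂ ↥B) (p q : ↥B),
      (p : A) ≤ (q : A) → y p ≤ y q := by
    intro y p q hpq
    have h1 : (0 : A) ≤ ((q - p : ↥B) : A) := by
      push_cast
      exact sub_nonneg.mpr hpq
    have := charpos y (q - p) h1
    rw [map_sub] at this
    exact sub_nonneg.mp this
  refine ⟨?_, ?_, ?_⟩
  · -- α_{mn} = α_m ∘ α_n
    intro y hy
    have hrearr : star (m * n) * (m * n) = star n * (star m * m) * n := by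
      rw [star_mul]; noncomm_ring
    have hQ : y ⟨star (m * n) * (m * n), hmn⟩ = y ⟨star n * (star m * m) * n, hNn _ hmm⟩ :=
      yeq y _ _ hrearr
    have hNNnonneg : (0 : ℂ) ≤ y ⟨star n * n, hnn⟩ := charpos y _ (star_mul_self_nonneg n)
    have hNNpos : 0 < y ⟨star n * n, hnn⟩ := by
      rcases eq_or_lt_of_le hNNnonneg with h0 | h0
      · exfalso
        have hle : star n * (star m * m) * n ≤ ‖star m * m‖ • (star n * n) :=
          CStarAlgebra.star_left_conjugate_le_norm_smul (IsSelfAdjoint.star_mul_self m)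
        have hmem : ((‖star m * m‖ : ℝ) : ℂ) • (star n * n) ∈ B :=
          SMulMemClass.smul_mem _ hnn
        have h2 : y ⟨star n * (star m * m) * n, hNn _ hmm⟩
            ≤ y ⟨((‖star m * m‖ : ℝ) : ℂ) • (star n * n), hmem⟩ := by
          refine charmono y _ _ ?_
          show star n * (star m * m) * n ≤ ((‖star m * m‖ : ℝ) : ℂ) • (star n * n)
          rw [Complex.coe_smul]
          exact hle
        have h3 : y ⟨((‖star m * m‖ : ℝ) : ℂ) • (star n * n), hmem⟩
            = ((‖star m * m‖ : ℝ) : ℂ) * y ⟨star n * n, hnn⟩ := by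
          have h4 : (⟨((‖star m * m‖ : ℝ) : ℂ) • (star n * n), hmem⟩ : ↥B)
              = ((‖star m * m‖ : ℝ) : ℂ) • (⟨star n * n, hnn⟩ : ↥B) := Subtype.ext rfl
          rw [h4, map_smul, smul_eq_mul]
        have h6 : ((‖star m * m‖ : ℝ) : ℂ) * y ⟨star n * n, hnn⟩ = 0 := by
          rw [← h0, mul_zero]
        have h7 : y ⟨star n * (star m * m) * n, hNn _ hmm⟩ ≤ 0 := by
          rw [h3, h6] at h2; exact h2
        rw [← hQ] at h7
        exact absurd (lt_of_lt_of_le hy h7) (lt_irrefl 0)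
      · exact h0
    have hkey : αn y ⟨star m * m, hmm⟩ * y ⟨star n * n, hnn⟩
        = y ⟨star (m * n) * (m * n), hmn⟩ := by
      rw [hQ]
      exact (hαn y hNNpos ⟨star m * m, hmm⟩).symm
    have hMMpos : 0 < αn y ⟨star m * m, hmm⟩ :=
      stmt18_cpos (by rw [hkey]; exact hy) hNNpos
    refine DFunLike.ext _ _ fun b => ?_
    have e1 : y ⟨star (m * n) * ↑b * (m * n), hNmn ↑b b.2⟩
        = αmn y b * y ⟨star (m * n) * (m * n), hmn⟩ := hαmn y hy b
    have e2 : star (m * n) * ↑b * (m * n) = star n * (star m * ↑b * m) * n := by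
      rw [star_mul]; noncomm_ring
    have e3 : y ⟨star n * (star m * ↑b * m) * n, hNn _ (hNm ↑b b.2)⟩
        = αn y ⟨star m * ↑b * m, hNm ↑b b.2⟩ * y ⟨star n * n, hnn⟩ :=
      hαn y hNNpos ⟨star m * ↑b * m, hNm ↑b b.2⟩
    have e4 : αn y ⟨star m * ↑b * m, hNm ↑b b.2⟩
        = αm (αn y) b * αn y ⟨star m * m, hmm⟩ := hαm (αn y) hMMpos b
    have hc : αmn y b * y ⟨star (m * n) * (m * n), hmn⟩
        = αm (αn y) b * y ⟨star (m * n) * (m * n), hmn⟩ := by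
      rw [← e1, yeq y _ (hNn _ (hNm ↑b b.2)) e2, e3, e4, mul_assoc, hkey]
    exact mul_right_cancel₀ hy.ne' hc
  · -- α_{n*} ∘ α_n = id on dom
    intro y hy
    have h1 : y ⟨star n * (n * star n) * n, hNn _ hnstar⟩
        = αn y ⟨n * star n, hnstar⟩ * y ⟨star n * n, hnn⟩ := hαn y hy ⟨n * star n, hnstar⟩
    have h2 : y ⟨star n * (n * star n) * n, hNn _ hnstar⟩
        = y ⟨star n * n, hnn⟩ * y ⟨star n * n, hnn⟩ := by
      have e : star n * (n * star n) * n = star n * n * (star n * n) := by noncomm_ring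
      rw [yeq y _ (mul_mem hnn hnn) e]
      exact map_mul y ⟨star n * n, hnn⟩ ⟨star n * n, hnn⟩
    have hα0 : αn y ⟨n * star n, hnstar⟩ = y ⟨star n * n, hnn⟩ :=
      mul_right_cancel₀ hy.ne' (h1.symm.trans h2)
    have hb0pos : 0 < αn y ⟨n * star n, hnstar⟩ := hα0 ▸ hy
    refine DFunLike.ext _ _ fun b => ?_
    have g1 : (αn y) ⟨n * ↑b * star n, hNnstar ↑b b.2⟩
        = αnstar (αn y) b * αn y ⟨n * star n, hnstar⟩ := hαnstar (αn y) hb0pos b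
    have g2 : y ⟨star n * (n * ↑b * star n) * n, hNn _ (hNnstar ↑b b.2)⟩
        = (αn y) ⟨n * ↑b * star n, hNnstar ↑b b.2⟩ * y ⟨star n * n, hnn⟩ :=
      hαn y hy ⟨n * ↑b * star n, hNnstar ↑b b.2⟩
    have g3 : y ⟨star n * (n * ↑b * star n) * n, hNn _ (hNnstar ↑b b.2)⟩
        = y ⟨star n * n, hnn⟩ * y b * y ⟨star n * n, hnn⟩ := by
      have e : star n * (n * ↑b * star n) * n = star n * n * ↑b * (star n * n) := by
        noncomm_ring
      rw [yeq y _ (mul_mem (mul_mem hnn b.2) hnn) e]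
      have h4 : (⟨star n * n * ↑b * (star n * n), mul_mem (mul_mem hnn b.2) hnn⟩ : ↥B)
          = ⟨star n * n, hnn⟩ * b * ⟨star n * n, hnn⟩ := rfl
      rw [h4, map_mul, map_mul]
    have hc : αnstar (αn y) b * (y ⟨star n * n, hnn⟩ * y ⟨star n * n, hnn⟩)
        = y b * (y ⟨star n * n, hnn⟩ * y ⟨star n * n, hnn⟩) := by
      have h5 := g2.symm.trans g3
      rw [g1, hα0] at h5
      linear_combination h5
    exact mul_right_cancel₀ (mul_ne_zero hy.ne' hy.ne') hc
  · -- α_n ∘ α_{n*} = id on dom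
    intro x hx
    have h1 : x ⟨n * (star n * n) * star n, hNnstar _ hnn⟩
        = αnstar x ⟨star n * n, hnn⟩ * x ⟨n * star n, hnstar⟩ := hαnstar x hx ⟨star n * n, hnn⟩
    have h2 : x ⟨n * (star n * n) * star n, hNnstar _ hnn⟩
        = x ⟨n * star n, hnstar⟩ * x ⟨n * star n, hnstar⟩ := by
      have e : n * (star n * n) * star n = n * star n * (n * star n) := by noncomm_ring
      rw [yeq x _ (mul_mem hnstar hnstar) e]
      exact map_mul x ⟨n * star n, hnstar⟩ ⟨n * star n, hnstar⟩
    have hα0 : αnstar x ⟨star n * n, hnn⟩ = x ⟨n * star n, hnstar⟩ :=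
      mul_right_cancel₀ hx.ne' (h1.symm.trans h2)
    have hb0pos : 0 < αnstar x ⟨star n * n, hnn⟩ := hα0 ▸ hx
    refine DFunLike.ext _ _ fun b => ?_
    have g1 : (αnstar x) ⟨star n * ↑b * n, hNn ↑b b.2⟩
        = αn (αnstar x) b * αnstar x ⟨star n * n, hnn⟩ := hαn (αnstar x) hb0pos b
    have g2 : x ⟨n * (star n * ↑b * n) * star n, hNnstar _ (hNn ↑b b.2)⟩
        = (αnstar x) ⟨star n * ↑b * n, hNn ↑b b.2⟩ * x ⟨n * star n, hnstar⟩ :=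
      hαnstar x hx ⟨star n * ↑b * n, hNn ↑b b.2⟩
    have g3 : x ⟨n * (star n * ↑b * n) * star n, hNnstar _ (hNn ↑b b.2)⟩
        = x ⟨n * star n, hnstar⟩ * x b * x ⟨n * star n, hnstar⟩ := by
      have e : n * (star n * ↑b * n) * star n = n * star n * ↑b * (n * star n) := by
        noncomm_ring
      rw [yeq x _ (mul_mem (mul_mem hnstar b.2) hnstar) e]
      have h4 : (⟨n * star n * ↑b * (n * star n), mul_mem (mul_mem hnstar b.2) hnstar⟩ : ↥B)
          = ⟨n * star n, hnstar⟩ * b * ⟨n * star n, hnstar⟩ := rfl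
      rw [h4, map_mul, map_mul]
    have hc : αn (αnstar x) b * (x ⟨n * star n, hnstar⟩ * x ⟨n * star n, hnstar⟩)
        = x b * (x ⟨n * star n, hnstar⟩ * x ⟨n * star n, hnstar⟩) := by
      have h5 := g2.symm.trans g3
      rw [g1, hα0] at h5
      linear_combination h5
    exact mul_right_cancel₀ (mul_ne_zero hx.ne' hx.ne') hc
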